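/- Let ψ be a branching mechanism of Lévy–Khintchine form with δ > 1, let d be an integer with d > 2δ/(δ−1), and fix K ∈ (0,∞). Then there exists a constant C ∈ (0,∞), depending only on d, ψ and K, such that J(r) ≤ C for all r ∈ (0, (K/ψ′(1))^{1/2}). -/

import Mathlib

open MeasureTheory Filter Set

noncomputable section

/-- The branching mechanism `ψ(λ) = αλ + βλ² + ∫_{(0,∞)} (e^{−λr} − 1 + λr) π(dr)`. -/
def psiFun (α β : ℝ) (π : Measure ℝ) : ℝ → ℝ := fun l =>
  α * l + β * l ^ 2 + ∫ r, (Real.exp (-(l * r)) - 1 + l * r) ∂π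

/-- `ψ′(λ) = α + 2βλ + ∫_{(0,∞)} r(1 − e^{−λr}) π(dr)`. -/
def psiDeriv (α β : ℝ) (π : Measure ℝ) : ℝ → ℝ := fun l =>
  α + 2 * β * l + ∫ r, r * (1 - Real.exp (-(l * r))) ∂π

/-- `(α, β, π)` is the datum of a (sub)critical branching mechanism of
Lévy–Khintchine form: `α, β ≥ 0`, `π` is a Borel measure carried by `(0,∞)`
with `∫ min(r, r²) π(dr) < ∞`. -/
structure IsBranchingMechanism (α β : ℝ) (π : Measure ℝ) : Prop where
  alpha_nonneg : 0 ≤ α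
  beta_nonneg : 0 ≤ β
  carried_on_pos : π (Set.Iic 0) = 0
  integ_min : Integrable (fun r => min r (r ^ 2)) π

/-- The lower index `γ_f = sup {c ≥ 0 : f(λ)λ^{−c} → ∞}` (with `sup ∅ = 0`). -/
def lowerIndex (f : ℝ → ℝ) : ℝ :=
  sSup {c : ℝ | 0 ≤ c ∧ Tendsto (fun l : ℝ => f l * l ^ (-c)) atTop atTop}

/-- The upper index `η_f = inf {c ≥ 0 : f(λ)λ^{−c} → 0}`. -/
def upperIndex (f : ℝ → ℝ) : ℝ :=
  sInf {c : ℝ | 0 ≤ c ∧ Tendsto (fun l : ℝ => f l * l ^ (-c)) atTop (nhds 0)}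

/-- `δ_f = sup {c ≥ 0 : ∃ C > 0, ∀ 1 ≤ μ ≤ λ, C f(μ)μ^{−c} ≤ f(λ)λ^{−c}}`. -/
def deltaIndex (f : ℝ → ℝ) : ℝ :=
  sSup {c : ℝ | 0 ≤ c ∧ ∃ C : ℝ, 0 < C ∧
    ∀ μ l : ℝ, 1 ≤ μ → μ ≤ l → C * (f μ * μ ^ (-c)) ≤ f l * l ^ (-c)}

/-- `J(r) = r² q_r^{2/(d−2)} ∫_1^{q_r} ψ′(v) v^{−d/(d−2)} dv`
where `q_r = ψ′^{−1}(K·r^{−2})`. -/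
def Jfun (α β : ℝ) (π : Measure ℝ) (ψ'inv : ℝ → ℝ) (K : ℝ) (d : ℕ) (r : ℝ) : ℝ :=
  r ^ 2 * ψ'inv (K / r ^ 2) ^ ((2 : ℝ) / ((d : ℝ) - 2)) *
    ∫ v in (1 : ℝ)..ψ'inv (K / r ^ 2), psiDeriv α β π v * v ^ (-(d : ℝ) / ((d : ℝ) - 2))

lemma pw_nonneg {x : ℝ} : 0 ≤ Real.exp (-x) - 1 + x := by
  nlinarith [Real.add_one_le_exp (-x)]

lemma pw_le_mul {x : ℝ} (hx : 0 ≤ x) :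
    Real.exp (-x) - 1 + x ≤ x * (1 - Real.exp (-x)) := by
  have h1 : (1 + x) * Real.exp (-x) ≤ 1 := by
    have h2 := Real.add_one_le_exp x
    have he : Real.exp (-x) = (Real.exp x)⁻¹ := Real.exp_neg x
    rw [he, mul_inv_le_iff₀ (Real.exp_pos x)]
    linarith
  nlinarith

lemma pw_one_sub_le {x : ℝ} : 1 - Real.exp (-x) ≤ x := by
  nlinarith [Real.add_one_le_exp (-x)]

lemma pw_one_sub_nonneg {x : ℝ} (hx : 0 ≤ x) : 0 ≤ 1 - Real.exp (-x) := by
  have : Real.exp (-x) ≤ 1 := by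
    rw [show (1:ℝ) = Real.exp 0 from (Real.exp_zero).symm]
    exact Real.exp_le_exp.mpr (by linarith)
  linarith

lemma pw_one_sub_le_one {x : ℝ} (hx : 0 ≤ x) : 1 - Real.exp (-x) ≤ 1 := by
  nlinarith [Real.exp_pos (-x)]

lemma min_bound {a b r : ℝ} (hr : 0 < r) (ha : 0 ≤ a) (hb : 0 ≤ b) :
    min (a * r) (b * r ^ 2) ≤ max a b * min r (r ^ 2) := by
  rcases le_total r 1 with h1 | h1
  · have hm : min r (r ^ 2) = r ^ 2 := min_eq_right (by nlinarith)
    rw [hm]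
    calc min (a * r) (b * r ^ 2) ≤ b * r ^ 2 := min_le_right _ _
      _ ≤ max a b * r ^ 2 := by nlinarith [le_max_right a b]
  · have hm : min r (r ^ 2) = r := min_eq_left (by nlinarith)
    rw [hm]
    calc min (a * r) (b * r ^ 2) ≤ a * r := min_le_left _ _
      _ ≤ max a b * r := by nlinarith [le_max_left a b]

variable {α β : ℝ} {π : Measure ℝ}

lemma ae_pos (h : IsBranchingMechanism α β π) : ∀ᵐ r ∂π, 0 < r := by
  rw [ae_iff]
  convert h.carried_on_pos using 2
  ext r
  simp

lemma integrable_deriv (h : IsBranchingMechanism α β π) {l : ℝ} (hl : 0 ≤ l) :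
    Integrable (fun r => r * (1 - Real.exp (-(l * r)))) π := by
  apply (h.integ_min.const_mul (max 1 l)).mono
  · apply Continuous.aestronglyMeasurable
    fun_prop
  · filter_upwards [ae_pos h] with r hr
    have hx : 0 ≤ l * r := by positivity
    have h1 : 0 ≤ 1 - Real.exp (-(l * r)) := pw_one_sub_nonneg hx
    have h2 : 1 - Real.exp (-(l * r)) ≤ 1 := pw_one_sub_le_one hx
    have h3 : 1 - Real.exp (-(l * r)) ≤ l * r := pw_one_sub_le
    have hb : r * (1 - Real.exp (-(l * r))) ≤ min (1 * r) (l * r ^ 2) := by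
      apply le_min <;> nlinarith
    have hmb : min (1 * r) (l * r ^ 2) ≤ max 1 l * min r (r ^ 2) :=
      min_bound hr zero_le_one hl
    rw [Real.norm_eq_abs, Real.norm_eq_abs, abs_of_nonneg (by positivity)]
    exact le_trans (le_trans hb hmb) (le_abs_self _)

lemma integrable_fun (h : IsBranchingMechanism α β π) {l : ℝ} (hl : 0 ≤ l) :
    Integrable (fun r => Real.exp (-(l * r)) - 1 + l * r) π := by
  apply (h.integ_min.const_mul (max l (l ^ 2))).mono
  · apply Continuous.aestronglyMeasurable
    fun_prop
  · filter_upwards [ae_pos h] with r hr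
    have hx : 0 ≤ l * r := by positivity
    have h0 : 0 ≤ Real.exp (-(l * r)) - 1 + l * r := pw_nonneg
    have h1 : Real.exp (-(l * r)) - 1 + l * r ≤ (l * r) * (1 - Real.exp (-(l * r))) :=
      pw_le_mul hx
    have h2 : 1 - Real.exp (-(l * r)) ≤ 1 := pw_one_sub_le_one hx
    have h3 : 1 - Real.exp (-(l * r)) ≤ l * r := pw_one_sub_le
    have h4 : 0 ≤ 1 - Real.exp (-(l * r)) := pw_one_sub_nonneg hx
    have hb : Real.exp (-(l * r)) - 1 + l * r ≤ min (l * r) (l ^ 2 * r ^ 2) := by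
      apply le_min <;> nlinarith
    have hmb : min (l * r) (l ^ 2 * r ^ 2) ≤ max l (l ^ 2) * min r (r ^ 2) :=
      min_bound hr hl (by positivity)
    rw [Real.norm_eq_abs, Real.norm_eq_abs, abs_of_nonneg h0]
    exact le_trans (le_trans hb hmb) (le_abs_self _)

lemma psiDeriv_mono (h : IsBranchingMechanism α β π) {a b : ℝ} (ha : 0 ≤ a) (hab : a ≤ b) :
    psiDeriv α β π a ≤ psiDeriv α β π b := by
  have hb : 0 ≤ b := ha.trans hab
  unfold psiDeriv
  have hint : (∫ r, r * (1 - Real.exp (-(a * r))) ∂π) ≤ ∫ r, r * (1 - Real.exp (-(b * r))) ∂π := by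
    apply integral_mono_ae (integrable_deriv h ha) (integrable_deriv h hb)
    filter_upwards [ae_pos h] with r hr
    have : Real.exp (-(b * r)) ≤ Real.exp (-(a * r)) :=
      Real.exp_le_exp.mpr (by nlinarith)
    nlinarith
  nlinarith [h.beta_nonneg]

lemma psiDeriv_zero : psiDeriv α β π 0 = α := by
  unfold psiDeriv
  simp

lemma psiFun_nonneg (h : IsBranchingMechanism α β π) {l : ℝ} (hl : 0 ≤ l) :
    0 ≤ psiFun α β π l := by
  unfold psiFun
  have : 0 ≤ ∫ r, (Real.exp (-(l * r)) - 1 + l * r) ∂π :=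
    integral_nonneg fun r => pw_nonneg
  nlinarith [h.alpha_nonneg, h.beta_nonneg, sq_nonneg l]

lemma psiFun_le (h : IsBranchingMechanism α β π) {l : ℝ} (hl : 0 ≤ l) :
    psiFun α β π l ≤ l * psiDeriv α β π l := by
  unfold psiFun psiDeriv
  have hint : (∫ r, (Real.exp (-(l * r)) - 1 + l * r) ∂π)
      ≤ ∫ r, l * (r * (1 - Real.exp (-(l * r)))) ∂π := by
    apply integral_mono_ae (integrable_fun h hl) ((integrable_deriv h hl).const_mul l)
    filter_upwards [ae_pos h] with r hr
    have := pw_le_mul (x := l * r) (by positivity)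
    nlinarith
  rw [integral_const_mul] at hint
  nlinarith [h.beta_nonneg, sq_nonneg l]

lemma mul_psiDeriv_le (h : IsBranchingMechanism α β π) {l : ℝ} (hl : 0 ≤ l) :
    l * psiDeriv α β π l ≤ psiFun α β π (2 * l) := by
  unfold psiFun psiDeriv
  have hint : (∫ r, l * (r * (1 - Real.exp (-(l * r)))) ∂π)
      ≤ ∫ r, (Real.exp (-(2 * l * r)) - 1 + 2 * l * r) ∂π := by
    apply integral_mono_ae ((integrable_deriv h hl).const_mul l) (integrable_fun h (by positivity))
    filter_upwards [ae_pos h] with r hr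
    have hx : 0 ≤ l * r := by positivity
    have hu : 0 < Real.exp (-(l * r)) := Real.exp_pos _
    have h1 : 1 - Real.exp (-(l * r)) ≤ l * r := pw_one_sub_le
    have h2 : Real.exp (-(2 * l * r)) = Real.exp (-(l * r)) ^ 2 := by
      rw [← Real.exp_nat_mul]; ring_nf
    nlinarith [sq_nonneg (1 - Real.exp (-(l * r)))]
  rw [integral_const_mul] at hint
  nlinarith [h.beta_nonneg, sq_nonneg l, h.alpha_nonneg]

lemma pw_double {x : ℝ} (hx : 0 ≤ x) :
    Real.exp (-(2*x)) - 1 + 2*x ≤ 4 * (Real.exp (-x) - 1 + x) := by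
  set f : ℝ → ℝ := fun t => 2*t + 4*Real.exp (-t) - Real.exp (-(2*t)) - 3 with hf
  have hderiv : ∀ y : ℝ, HasDerivAt f (2 + 4*(Real.exp (-y) * (-1)) - Real.exp (-(2*y)) * (-2)) y := by
    intro y
    have h1 : HasDerivAt (fun t : ℝ => Real.exp (-t)) (Real.exp (-y) * (-1)) y :=
      ((hasDerivAt_id y).neg).exp
    have h2 : HasDerivAt (fun t : ℝ => Real.exp (-(2*t))) (Real.exp (-(2*y)) * (-2)) y := by
      have := (((hasDerivAt_id y).const_mul (2:ℝ)).neg).exp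
      simpa using this
    have h3 : HasDerivAt (fun t : ℝ => 2*t) 2 y := by
      simpa using (hasDerivAt_id y).const_mul (2:ℝ)
    simpa [hf] using ((h3.add (h1.const_mul 4)).sub h2).sub_const 3
  have hmono : MonotoneOn f (Set.Ici (0:ℝ)) := by
    apply monotoneOn_of_deriv_nonneg (convex_Ici 0)
      (fun y _ => (hderiv y).continuousAt.continuousWithinAt)
      (fun y _ => (hderiv y).differentiableAt.differentiableWithinAt)
    intro y _
    rw [(hderiv y).deriv]
    have h2 : Real.exp (-(2*y)) = Real.exp (-y) ^ 2 := by
      rw [← Real.exp_nat_mul]; ring_nf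
    nlinarith [sq_nonneg (1 - Real.exp (-y))]
  have h0 : f 0 ≤ f x := hmono (Set.self_mem_Ici) hx hx
  simp only [hf] at h0
  simp at h0
  linarith

lemma psiFun_two_mul_le (h : IsBranchingMechanism α β π) {l : ℝ} (hl : 0 ≤ l) :
    psiFun α β π (2 * l) ≤ 4 * psiFun α β π l := by
  unfold psiFun
  have hint : (∫ r, (Real.exp (-(2 * l * r)) - 1 + 2 * l * r) ∂π)
      ≤ ∫ r, 4 * (Real.exp (-(l * r)) - 1 + l * r) ∂π := by
    apply integral_mono_ae (integrable_fun h (by positivity)) ((integrable_fun h hl).const_mul 4)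
    filter_upwards [ae_pos h] with r hr
    have := pw_double (x := l * r) (by positivity)
    calc Real.exp (-(2 * l * r)) - 1 + 2 * l * r
        = Real.exp (-(2 * (l * r))) - 1 + 2 * (l * r) := by ring_nf
      _ ≤ 4 * (Real.exp (-(l * r)) - 1 + l * r) := this
  rw [integral_const_mul] at hint
  nlinarith [h.beta_nonneg, sq_nonneg l, h.alpha_nonneg]


end

/-- if δ > 1 and d > 2δ/(δ−1), then J is bounded on
(0, (K/ψ′(1))^{1/2}) by a constant depending only on d, ψ and K. -/
theorem statement11 (α β : ℝ) (π : Measure ℝ) (h : IsBranchingMechanism α β π)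
    (hδ : 1 < deltaIndex (psiFun α β π))
    (d : ℕ)
    (hd : 2 * deltaIndex (psiFun α β π) / (deltaIndex (psiFun α β π) - 1) < (d : ℝ))
    (K : ℝ) (hK : 0 < K)
    (ψ'inv : ℝ → ℝ)
    (hψ'inv : ∀ x : ℝ, α ≤ x → 0 ≤ ψ'inv x ∧ psiDeriv α β π (ψ'inv x) = x)
    (hψ'inv' : ∀ y : ℝ, 0 ≤ y → ψ'inv (psiDeriv α β π y) = y) :
    ∃ C : ℝ, 0 < C ∧
      ∀ r : ℝ, 0 < r → r < Real.sqrt (K / psiDeriv α β π 1) →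
        Jfun α β π ψ'inv K d r ≤ C := by
  -- notation
  set δ := deltaIndex (psiFun α β π) with hδdef
  -- d > 2
  have hδ1 : 0 < δ - 1 := by linarith
  have hd2 : (2 : ℝ) < (d : ℝ) := by
    have h2 : (2 : ℝ) < 2 * δ / (δ - 1) := by
      rw [lt_div_iff₀ hδ1]; linarith
    linarith
  have hd2' : (0 : ℝ) < (d : ℝ) - 2 := by linarith
  set p : ℝ := (d : ℝ) / ((d : ℝ) - 2) with hpdef
  have hp1 : 1 < p := by
    rw [hpdef, lt_div_iff₀ hd2']; linarith
  have hpδ : p < δ := by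
    rw [div_lt_iff₀ hδ1] at hd
    rw [hpdef, div_lt_iff₀ hd2']
    nlinarith
  -- extract c from the delta index
  set S := {c : ℝ | 0 ≤ c ∧ ∃ C : ℝ, 0 < C ∧
    ∀ μ l : ℝ, 1 ≤ μ → μ ≤ l → C * (psiFun α β π μ * μ ^ (-c)) ≤ psiFun α β π l * l ^ (-c)} with hSdef
  have hSne : S.Nonempty := by
    by_contra hne
    rw [Set.not_nonempty_iff_eq_empty] at hne
    have : δ = 0 := by
      rw [hδdef, deltaIndex, ← hSdef, hne, Real.sSup_empty]
    linarith
  have hδS : δ = sSup S := by rw [hδdef, deltaIndex, hSdef]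
  obtain ⟨c, hcS, hpc⟩ := exists_lt_of_lt_csSup hSne (by rw [← hδS]; exact hpδ)
  obtain ⟨hc0, C₀, hC₀, Hc⟩ := hcS
  have hcp : 0 < c - p := by linarith
  refine ⟨4 * K / (C₀ * (c - p)), by positivity, ?_⟩
  intro r hr hrs
  -- degenerate case
  by_cases h1 : 0 < psiDeriv α β π 1
  swap
  · exfalso
    have hz : Real.sqrt (K / psiDeriv α β π 1) = 0 := by
      rw [Real.sqrt_eq_zero']
      exact div_nonpos_of_nonneg_of_nonpos hK.le (not_lt.mp h1)
    rw [hz] at hrs; linarith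
  -- main case
  have hr2 : (0:ℝ) < r ^ 2 := by positivity
  have hrK : r ^ 2 < K / psiDeriv α β π 1 := (Real.lt_sqrt hr.le).mp hrs
  set s := K / r ^ 2 with hsdef
  have hs0 : 0 < s := by positivity
  have h1s : psiDeriv α β π 1 < s := by
    rw [lt_div_iff₀ h1] at hrK
    rw [hsdef, lt_div_iff₀ hr2]
    linarith
  have hαs : α ≤ s := by
    have := psiDeriv_mono h (le_refl (0:ℝ)) zero_le_one
    rw [psiDeriv_zero] at this
    linarith
  obtain ⟨hq0, hqs⟩ := hψ'inv s hαs
  set q := ψ'inv s with hqdef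
  have hq1 : 1 ≤ q := by
    by_contra hq
    have := psiDeriv_mono h hq0 (le_of_not_ge hq)
    rw [hqs] at this
    linarith
  have hq0' : (0:ℝ) < q := lt_of_lt_of_le one_pos hq1
  -- the integral
  rw [Jfun, ← hsdef, ← hqdef]
  set e2 : ℝ := (2 : ℝ) / ((d : ℝ) - 2) with he2def
  have hpe : -(d : ℝ) / ((d : ℝ) - 2) = -p := by rw [hpdef, neg_div]
  rw [hpe]
  by_cases hint : IntervalIntegrable (fun v => psiDeriv α β π v * v ^ (-p)) volume 1 q
  swap
  · rw [intervalIntegral.integral_undef hint, mul_zero]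
    positivity
  -- bound constant
  set B : ℝ := C₀⁻¹ * (psiFun α β π (2 * q) * q ^ (-c)) with hBdef
  have hψ2q : 0 ≤ psiFun α β π (2 * q) := psiFun_nonneg h (by positivity)
  have hB0 : 0 ≤ B := by positivity
  set e : ℝ := c - 1 - p with hedef
  have h2cc : (2:ℝ) ^ (-c) * (2:ℝ) ^ c = 1 := by
    rw [← Real.rpow_add two_pos]; simp
  -- integrable comparison function
  have hgint : IntervalIntegrable (fun v => B * v ^ e) volume 1 q := by
    apply ContinuousOn.intervalIntegrable
    apply ContinuousOn.mul continuousOn_const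
    apply ContinuousOn.rpow_const continuousOn_id
    intro x hx
    rw [Set.uIcc_of_le hq1] at hx
    exact Or.inl (ne_of_gt (lt_of_lt_of_le one_pos hx.1))
  -- pointwise bound
  have hle : ∀ v ∈ Set.Icc (1:ℝ) q, psiDeriv α β π v * v ^ (-p) ≤ B * v ^ e := by
    intro v hv
    have hv1 : 1 ≤ v := hv.1
    have hv0 : (0:ℝ) < v := lt_of_lt_of_le one_pos hv1
    have hvq : v ≤ q := hv.2
    have h2v : (0:ℝ) < 2 * v := by linarith
    have h2q : (0:ℝ) < 2 * q := by linarith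
    have step1 : psiDeriv α β π v ≤ psiFun α β π (2 * v) / v := by
      rw [le_div_iff₀ hv0]
      have := mul_psiDeriv_le h hv0.le
      linarith [this]
    have heq : (2 * q : ℝ) ^ (-c) * (2 * v : ℝ) ^ c = q ^ (-c) * v ^ c := by
      rw [Real.mul_rpow (by norm_num) hq0'.le, Real.mul_rpow (by norm_num) hv0.le]
      calc (2:ℝ) ^ (-c) * q ^ (-c) * ((2:ℝ) ^ c * v ^ c)
          = ((2:ℝ) ^ (-c) * (2:ℝ) ^ c) * (q ^ (-c) * v ^ c) := by ring
        _ = q ^ (-c) * v ^ c := by rw [h2cc, one_mul]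
    have hZ := mul_le_mul_of_nonneg_left (Hc (2 * v) (2 * q) (by linarith) (by linarith))
      (inv_nonneg.mpr hC₀.le)
    rw [← mul_assoc, inv_mul_cancel₀ (ne_of_gt hC₀), one_mul] at hZ
    have step2 : psiFun α β π (2 * v) ≤ C₀⁻¹ * (psiFun α β π (2 * q) * q ^ (-c)) * v ^ c := by
      have hx : psiFun α β π (2 * v)
          = (psiFun α β π (2 * v) * (2 * v) ^ (-c)) * (2 * v) ^ c := by
        rw [mul_assoc, ← Real.rpow_add h2v]
        simp
      rw [hx]
      calc (psiFun α β π (2 * v) * (2 * v) ^ (-c)) * (2 * v) ^ c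
          ≤ (C₀⁻¹ * (psiFun α β π (2 * q) * (2 * q) ^ (-c))) * (2 * v) ^ c :=
            mul_le_mul_of_nonneg_right hZ (Real.rpow_pos_of_pos h2v c).le
        _ = C₀⁻¹ * psiFun α β π (2 * q) * ((2 * q) ^ (-c) * (2 * v) ^ c) := by ring
        _ = C₀⁻¹ * (psiFun α β π (2 * q) * q ^ (-c)) * v ^ c := by rw [heq]; ring
    have hvp : (0:ℝ) < v ^ (-p) := Real.rpow_pos_of_pos hv0 _
    have hchain : psiDeriv α β π v * v ^ (-p)
        ≤ (C₀⁻¹ * (psiFun α β π (2 * q) * q ^ (-c)) * v ^ c / v) * v ^ (-p) := by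
      apply mul_le_mul_of_nonneg_right _ hvp.le
      refine step1.trans ?_
      gcongr
    refine hchain.trans (le_of_eq ?_)
    have hvpow : v ^ c * v ^ (-(1:ℝ)) * v ^ (-p) = v ^ e := by
      rw [← Real.rpow_add hv0, ← Real.rpow_add hv0, hedef]
      ring_nf
    calc C₀⁻¹ * (psiFun α β π (2 * q) * q ^ (-c)) * v ^ c / v * v ^ (-p)
        = (C₀⁻¹ * (psiFun α β π (2 * q) * q ^ (-c))) * (v ^ c * v ^ (-(1:ℝ)) * v ^ (-p)) := by
          rw [Real.rpow_neg_one]; ring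
      _ = B * v ^ e := by rw [hvpow, hBdef]
  -- integral comparison
  have hIle : (∫ v in (1:ℝ)..q, psiDeriv α β π v * v ^ (-p))
      ≤ ∫ v in (1:ℝ)..q, B * v ^ e :=
    intervalIntegral.integral_mono_on hq1 hint hgint hle
  have he1 : e + 1 = c - p := by rw [hedef]; ring
  have hIg : (∫ v in (1:ℝ)..q, B * v ^ e) = B * ((q ^ (c - p) - 1) / (c - p)) := by
    rw [intervalIntegral.integral_const_mul, integral_rpow (Or.inl (by rw [hedef]; linarith)),
      he1, Real.one_rpow]
  -- final chain
  have hqe : q ^ e2 * q ^ (-c) * q ^ (c - p) = q⁻¹ := by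
    rw [← Real.rpow_add hq0', ← Real.rpow_add hq0']
    have hexp : e2 + -c + (c - p) = -1 := by
      rw [he2def, hpdef]
      field_simp
      ring
    rw [hexp, Real.rpow_neg_one]
  have hq2 : psiFun α β π (2 * q) ≤ 4 * (q * s) := by
    have ha := psiFun_two_mul_le h hq0
    have hb := psiFun_le h hq0
    rw [hqs] at hb
    linarith
  have hstep : r ^ 2 * q ^ e2 * (∫ v in (1:ℝ)..q, psiDeriv α β π v * v ^ (-p))
      ≤ r ^ 2 * q ^ e2 * (B * ((q ^ (c - p) - 1) / (c - p))) :=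
    mul_le_mul_of_nonneg_left (hIle.trans_eq hIg) (by positivity)
  refine hstep.trans ?_
  have hqcp : (0:ℝ) < q ^ (c - p) := Real.rpow_pos_of_pos hq0' _
  have hstep2 : r ^ 2 * q ^ e2 * (B * ((q ^ (c - p) - 1) / (c - p)))
      ≤ r ^ 2 * q ^ e2 * (B * (q ^ (c - p) / (c - p))) := by
    apply mul_le_mul_of_nonneg_left _ (by positivity)
    apply mul_le_mul_of_nonneg_left _ hB0
    gcongr
    linarith
  refine hstep2.trans ?_
  have hT : r ^ 2 * q ^ e2 * (B * (q ^ (c - p) / (c - p)))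
      = (r ^ 2 * C₀⁻¹ / (c - p)) * (psiFun α β π (2 * q) * (q ^ e2 * q ^ (-c) * q ^ (c - p))) := by
    rw [hBdef]; ring
  rw [hT, hqe]
  have hfac : (0:ℝ) ≤ r ^ 2 * C₀⁻¹ / (c - p) := by positivity
  have hlast : psiFun α β π (2 * q) * q⁻¹ ≤ 4 * s := by
    have := mul_le_mul_of_nonneg_right hq2 (inv_nonneg.mpr hq0'.le)
    calc psiFun α β π (2 * q) * q⁻¹ ≤ 4 * (q * s) * q⁻¹ := this
      _ = 4 * s := by field_simp
  calc (r ^ 2 * C₀⁻¹ / (c - p)) * (psiFun α β π (2 * q) * q⁻¹)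
      ≤ (r ^ 2 * C₀⁻¹ / (c - p)) * (4 * s) := mul_le_mul_of_nonneg_left hlast hfac
    _ = 4 * K / (C₀ * (c - p)) := by
        rw [hsdef]
        field_simp
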